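/- Let d, m ≥ 1 and let A₁,…,A_m and B₁,…,B_m be complex d×d matrices such that each A_i and each B_i is normal, A_iA_j = A_jA_i for all i,j, and B_iB_j = B_jB_i for all i,j. Then for every complex d×d matrix T, Σ_{i=1}^m A_i T B_i = 0 if and only if Σ_{i=1}^m A_i* T B_i* = 0, where A* denotes the conjugate transpose. -/
import Mathlib
open Matrix

lemma trace_hermit_zero {d : ℕ} (M : Matrix (Fin d) (Fin d) ℂ) :
    trace (Mᴴ * M) = 0 ↔ M = 0 := by
  have key : trace (Mᴴ * M) = ((∑ j, ∑ i, Complex.normSq (M i j) : ℝ) : ℂ) := by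
    simp only [trace, diag, mul_apply, conjTranspose_apply, Complex.ofReal_sum]
    refine Finset.sum_congr rfl fun j _ => Finset.sum_congr rfl fun i _ => ?_
    rw [Complex.star_def, ← Complex.normSq_eq_conj_mul_self]
  constructor
  · intro h
    rw [key] at h
    have hsum : ∑ j, ∑ i, Complex.normSq (M i j) = 0 := by exact_mod_cast h
    ext i j
    have h1 := (Finset.sum_eq_zero_iff_of_nonneg (fun x _ => Finset.sum_nonneg
      (fun y _ => Complex.normSq_nonneg (M y x)))).mp hsum j (Finset.mem_univ j)
    have h2 := (Finset.sum_eq_zero_iff_of_nonneg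
      (fun y _ => Complex.normSq_nonneg (M y j))).mp h1 i (Finset.mem_univ i)
    simpa using Complex.normSq_eq_zero.mp h2
  · intro h; simp [h]

lemma tr_cyc4 {d : ℕ} (a b c e : Matrix (Fin d) (Fin d) ℂ) :
    trace (a * (b * (c * e))) = trace (b * (c * (e * a))) := by
  rw [trace_mul_comm a (b * (c * e)), Matrix.mul_assoc, Matrix.mul_assoc]

lemma fuglede {d : ℕ} (N M : Matrix (Fin d) (Fin d) ℂ)
    (hN : Nᴴ * N = N * Nᴴ) (hc : N * M = M * N) : Nᴴ * M = M * Nᴴ := by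
  have hz : trace ((Nᴴ * M - M * Nᴴ)ᴴ * (Nᴴ * M - M * Nᴴ)) = 0 := by
    simp only [conjTranspose_sub, conjTranspose_mul, conjTranspose_conjTranspose,
      sub_mul, mul_sub, trace_sub, Matrix.mul_assoc]
    have h12 : (Mᴴ * (N * (Nᴴ * M))).trace = (N * (Mᴴ * (Nᴴ * M))).trace := by
      rw [tr_cyc4 N Mᴴ Nᴴ M, ← hc, ← Matrix.mul_assoc Nᴴ N M, hN, ← Matrix.mul_assoc N Nᴴ M]
    have h34 : (Mᴴ * (N * (M * Nᴴ))).trace = (N * (Mᴴ * (M * Nᴴ))).trace := by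
      rw [tr_cyc4 N Mᴴ M Nᴴ, ← Matrix.mul_assoc N M Nᴴ, hc, hN, Matrix.mul_assoc M N Nᴴ]
    rw [h12, h34]; ring
  have := (trace_hermit_zero _).mp hz
  exact sub_eq_zero.mp this

lemma term_trace {d : ℕ} (P Q R S T : Matrix (Fin d) (Fin d) ℂ) :
    trace ((P * T * Q)ᴴ * (R * T * S)) = trace (Tᴴ * (Pᴴ * (R * (T * (S * Qᴴ))))) := by
  simp only [conjTranspose_mul, Matrix.mul_assoc]
  rw [trace_mul_comm]
  simp only [Matrix.mul_assoc]

theorem matrix_generalized_fuglede_putnam (d m : ℕ) (hd : 1 ≤ d) (hm : 1 ≤ m)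
    (A B : Fin m → Matrix (Fin d) (Fin d) ℂ)
    (hA_normal : ∀ i, (A i)ᴴ * A i = A i * (A i)ᴴ)
    (hB_normal : ∀ i, (B i)ᴴ * B i = B i * (B i)ᴴ)
    (hA_comm : ∀ i j, A i * A j = A j * A i)
    (hB_comm : ∀ i j, B i * B j = B j * B i)
    (T : Matrix (Fin d) (Fin d) ℂ) :
    (∑ i, A i * T * B i) = 0 ↔ (∑ i, (A i)ᴴ * T * (B i)ᴴ) = 0 := by
  have expand : ∀ (X Y : Fin m → Matrix (Fin d) (Fin d) ℂ),
      trace ((∑ i, X i)ᴴ * (∑ j, Y j)) = ∑ i, ∑ j, trace ((X i)ᴴ * (Y j)) := by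
    intro X Y
    rw [conjTranspose_sum, Finset.sum_mul]
    rw [trace_sum]
    exact Finset.sum_congr rfl fun i _ => by rw [Finset.mul_sum, trace_sum]
  have key : trace ((∑ i, A i * T * B i)ᴴ * (∑ j, A j * T * B j))
      = trace ((∑ i, (A i)ᴴ * T * (B i)ᴴ)ᴴ * (∑ j, (A j)ᴴ * T * (B j)ᴴ)) := by
    rw [expand, expand]
    rw [Finset.sum_comm]
    refine Finset.sum_congr rfl fun j _ => Finset.sum_congr rfl fun i _ => ?_
    rw [term_trace, term_trace]
    have ha := fuglede (A i) (A j) (hA_normal i) (hA_comm i j)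
    have hb := fuglede (B i) (B j) (hB_normal i) (hB_comm i j)
    simp only [conjTranspose_conjTranspose]
    rw [← Matrix.mul_assoc (A i)ᴴ (A j), ha, Matrix.mul_assoc, ← hb]
  constructor
  · intro h
    refine (trace_hermit_zero _).mp ?_
    rw [← key, h]; simp
  · intro h
    refine (trace_hermit_zero _).mp ?_
    rw [key, h]; simp
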